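/- Let a, b ∈ ℝ^n be nonnegative nonincreasing vectors with ∑_{i=1}^k b_i ≤ ∑_{i=1}^k a_i for all k = 1,...,n. Then there exists a substochastic monotone matrix A such that Aa = b. -/

import Mathlib

def Substochastic {n : ℕ} (A : Matrix (Fin n) (Fin n) ℝ) : Prop :=
  (∀ i j, 0 ≤ A i j) ∧ (∀ i, ∑ j, A i j ≤ 1) ∧ (∀ j, ∑ i, A i j ≤ 1)

/-- A matrix is monotone if it maps nonnegative nonincreasing vectors to nonincreasing vectors. -/
def MonotoneMatrix {n : ℕ} (A : Matrix (Fin n) (Fin n) ℝ) : Prop :=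
  ∀ x : Fin n → ℝ, (∀ i, 0 ≤ x i) → (∀ i j : Fin n, i ≤ j → x j ≤ x i) →
    ∀ i j : Fin n, i ≤ j → A.mulVec x j ≤ A.mulVec x i

namespace HLPaux
open Finset
noncomputable section

def P (a : ℕ → ℝ) (k : ℕ) : ℝ := ∑ i ∈ Finset.range k, a i
def NN (n : ℕ) (v : ℕ → ℝ) : Prop := ∀ i, i < n → 0 ≤ v i
def NI (n : ℕ) (v : ℕ → ℝ) : Prop := ∀ i j, i ≤ j → j < n → v j ≤ v i

lemma P_succ (a : ℕ → ℝ) (k : ℕ) : P a (k+1) = P a k + a k := by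
  simp [P, Finset.sum_range_succ]

lemma P_shift (v : ℕ → ℝ) (k j : ℕ) : P (fun i => v (i + k)) j = P v (k + j) - P v k := by
  induction j with
  | zero => simp [P]
  | succ m ih => rw [P_succ, ih, ← Nat.add_assoc, P_succ]; ring_nf


lemma P_nonneg {n : ℕ} {v : ℕ → ℝ} (h : NN n v) {k : ℕ} (hk : k ≤ n) : 0 ≤ P v k :=
  Finset.sum_nonneg fun i hi => h i (lt_of_lt_of_le (Finset.mem_range.mp hi) hk)

/-- averages nonincreasing: k * P a n ≤ n * P a k -/
lemma avg_mono {n : ℕ} {a : ℕ → ℝ} (h0 : NN n a) (h1 : NI n a) {k : ℕ} (hk : k ≤ n) :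
    (k : ℝ) * P a n ≤ (n : ℝ) * P a k := by
  rcases Nat.eq_zero_or_pos k with hk0 | hk0
  · subst hk0
    simp [P]
  · have hsplit : P a n = P a k + ∑ i ∈ Finset.Ico k n, a i := by
      rw [P, P, Finset.range_eq_Ico, Finset.range_eq_Ico]
      exact (Finset.sum_Ico_consecutive _ (Nat.zero_le k) hk).symm
    have hR : ∑ i ∈ Finset.Ico k n, a i ≤ (n - k : ℕ) * a (k-1) := by
      calc ∑ i ∈ Finset.Ico k n, a i ≤ ∑ _i ∈ Finset.Ico k n, a (k-1) := by
            apply Finset.sum_le_sum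
            intro i hi
            rcases Finset.mem_Ico.mp hi with ⟨hi1, hi2⟩
            exact h1 (k-1) i (le_trans (Nat.sub_le k 1) hi1) hi2
        _ = (n - k : ℕ) * a (k-1) := by
            rw [Finset.sum_const, Nat.card_Ico, nsmul_eq_mul]
    have hL : (k : ℝ) * a (k-1) ≤ P a k := by
      calc (k : ℝ) * a (k-1) = ∑ _i ∈ Finset.range k, a (k-1) := by
            rw [Finset.sum_const, Finset.card_range, nsmul_eq_mul]
        _ ≤ P a k := by
            apply Finset.sum_le_sum
            intro i hi
            exact h1 i (k-1) (Nat.le_sub_one_of_lt (Finset.mem_range.mp hi))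
              (lt_of_lt_of_le (Nat.sub_lt hk0 one_pos) hk)
    have hak1 : 0 ≤ a (k-1) := h0 (k-1) (lt_of_lt_of_le (Nat.sub_lt hk0 one_pos) hk)
    have key : (k:ℝ) * P a n = (k:ℝ) * P a k + (k:ℝ) * ∑ i ∈ Finset.Ico k n, a i := by
      rw [hsplit]; ring
    have h2 : (k:ℝ) * ∑ i ∈ Finset.Ico k n, a i ≤ (k:ℝ) * ((n-k:ℕ) * a (k-1)) :=
      mul_le_mul_of_nonneg_left hR (Nat.cast_nonneg k)
    have h3 : (k:ℝ) * ((n-k:ℕ) * a (k-1)) = ((n-k:ℕ):ℝ) * ((k:ℝ) * a (k-1)) := by ring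
    have h4 : ((n-k:ℕ):ℝ) * ((k:ℝ) * a (k-1)) ≤ ((n-k:ℕ):ℝ) * P a k :=
      mul_le_mul_of_nonneg_left hL (Nat.cast_nonneg _)
    have h5 : ((n-k:ℕ):ℝ) = (n:ℝ) - (k:ℝ) := by
      rw [Nat.cast_sub hk]
    nlinarith [P_nonneg h0 hk]


def IsDS (n : ℕ) (A : ℕ → ℕ → ℝ) : Prop :=
  (∀ i j, 0 ≤ A i j) ∧ (∀ i, i < n → ∑ j ∈ range n, A i j = 1) ∧
    (∀ j, j < n → ∑ i ∈ range n, A i j = 1)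

def IsSS (n : ℕ) (A : ℕ → ℕ → ℝ) : Prop :=
  (∀ i j, 0 ≤ A i j) ∧ (∀ i, i < n → ∑ j ∈ range n, A i j ≤ 1) ∧
    (∀ j, j < n → ∑ i ∈ range n, A i j ≤ 1)

def Mono (n : ℕ) (A : ℕ → ℕ → ℝ) : Prop :=
  ∀ x : ℕ → ℝ, NN n x → NI n x → ∀ i i', i ≤ i' → i' < n →
    ∑ j ∈ range n, A i' j * x j ≤ ∑ j ∈ range n, A i j * x j

lemma IsDS.isSS {n A} (h : IsDS n A) : IsSS n A :=
  ⟨h.1, fun i hi => le_of_eq (h.2.1 i hi), fun j hj => le_of_eq (h.2.2 j hj)⟩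

lemma out_ge {n : ℕ} {A : ℕ → ℕ → ℝ} (hDS : IsDS n A) {x : ℕ → ℝ} {c : ℝ}
    (hx : ∀ j, j < n → c ≤ x j) {i : ℕ} (hi : i < n) :
    c ≤ ∑ j ∈ range n, A i j * x j := by
  calc c = ∑ j ∈ range n, A i j * c := by
        rw [← Finset.sum_mul, hDS.2.1 i hi, one_mul]
    _ ≤ ∑ j ∈ range n, A i j * x j := by
        apply Finset.sum_le_sum
        intro j hj
        exact mul_le_mul_of_nonneg_left (hx j (Finset.mem_range.mp hj)) (hDS.1 i j)

lemma out_le {n : ℕ} {A : ℕ → ℕ → ℝ} (hDS : IsDS n A) {x : ℕ → ℝ} {c : ℝ}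
    (hx : ∀ j, j < n → x j ≤ c) {i : ℕ} (hi : i < n) :
    ∑ j ∈ range n, A i j * x j ≤ c := by
  calc ∑ j ∈ range n, A i j * x j ≤ ∑ j ∈ range n, A i j * c := by
        apply Finset.sum_le_sum
        intro j hj
        exact mul_le_mul_of_nonneg_left (hx j (Finset.mem_range.mp hj)) (hDS.1 i j)
    _ = c := by rw [← Finset.sum_mul, hDS.2.1 i hi, one_mul]

/-- the pinch matrix λI + (1-λ)J on the n-block -/
def Tmat (n : ℕ) (t : ℝ) : ℕ → ℕ → ℝ :=
  fun i j => if i < n ∧ j < n then ((if i = j then t else 0) + (1 - t) / n) else 0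

lemma Tmat_apply {n : ℕ} {t : ℝ} (x : ℕ → ℝ) {i : ℕ} (hi : i < n) :
    ∑ j ∈ range n, Tmat n t i j * x j = t * x i + (1 - t) / n * P x n := by
  have : ∀ j ∈ range n, Tmat n t i j * x j
      = (if i = j then t * x j else 0) + (1 - t) / n * x j := by
    intro j hj
    rw [Tmat, if_pos ⟨hi, Finset.mem_range.mp hj⟩]
    by_cases h : i = j <;> simp [h] <;> ring
  rw [Finset.sum_congr rfl this, Finset.sum_add_distrib, Finset.sum_ite_eq (range n) i,
    if_pos (Finset.mem_range.mpr hi), ← Finset.mul_sum]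
  rfl

lemma Tmat_DS {n : ℕ} {t : ℝ} (hn : 0 < n) (h0 : 0 ≤ t) (h1 : t ≤ 1) : IsDS n (Tmat n t) := by
  have hnn : (0:ℝ) < n := Nat.cast_pos.mpr hn
  refine ⟨?_, ?_, ?_⟩
  · intro i j
    rw [Tmat]
    split
    · have : 0 ≤ (1-t)/n := div_nonneg (by linarith) (le_of_lt hnn)
      split <;> linarith
    · exact le_refl 0
  · intro i hi
    have h := Tmat_apply (n := n) (t := t) (fun _ => (1:ℝ)) hi
    have hP : P (fun _ => (1:ℝ)) n = n := by simp [P]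
    rw [hP] at h
    have : ∑ j ∈ range n, Tmat n t i j = ∑ j ∈ range n, Tmat n t i j * (fun _ => (1:ℝ)) j := by
      simp
    rw [this, h]
    field_simp
    ring
  · intro j hj
    have hsymm : ∀ i, Tmat n t i j = Tmat n t j i := by
      intro i
      simp only [Tmat, and_comm]
      rcases eq_or_ne i j with h | h
      · simp [h]
      · simp [h, h.symm]
    rw [Finset.sum_congr rfl (fun i _ => hsymm i)]
    have h := Tmat_apply (n := n) (t := t) (fun _ => (1:ℝ)) hj
    have hP : P (fun _ => (1:ℝ)) n = n := by simp [P]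
    rw [hP] at h
    have : ∑ i ∈ range n, Tmat n t j i = ∑ i ∈ range n, Tmat n t j i * (fun _ => (1:ℝ)) i := by
      simp
    rw [this, h]
    field_simp
    ring

lemma Tmat_mono {n : ℕ} {t : ℝ} (h0 : 0 ≤ t) : Mono n (Tmat n t) := by
  intro x hx0 hx1 i i' hii' hi'
  have hi : i < n := lt_of_le_of_lt hii' hi'
  rw [Tmat_apply x hi, Tmat_apply x hi']
  have := hx1 i i' hii' hi'
  nlinarith

/-- matrix product restricted to the n-block -/
def MulM (n : ℕ) (A B : ℕ → ℕ → ℝ) : ℕ → ℕ → ℝ := fun i j => ∑ l ∈ range n, A i l * B l j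

lemma MulM_apply {n : ℕ} (A B : ℕ → ℕ → ℝ) (x : ℕ → ℝ) (i : ℕ) :
    ∑ j ∈ range n, MulM n A B i j * x j
      = ∑ l ∈ range n, A i l * (∑ j ∈ range n, B l j * x j) := by
  simp only [MulM, Finset.sum_mul, Finset.mul_sum]
  rw [Finset.sum_comm]
  apply Finset.sum_congr rfl
  intro l _
  apply Finset.sum_congr rfl
  intro j _
  ring

lemma MulM_DS {n : ℕ} {A B : ℕ → ℕ → ℝ} (hA : IsDS n A) (hB : IsDS n B) :
    IsDS n (MulM n A B) := by
  refine ⟨?_, ?_, ?_⟩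
  · intro i j
    exact Finset.sum_nonneg fun l _ => mul_nonneg (hA.1 i l) (hB.1 l j)
  · intro i hi
    have := MulM_apply (n := n) A B (fun _ => (1:ℝ)) i
    simp only [mul_one] at this
    rw [this]
    rw [Finset.sum_congr rfl (fun l hl => by rw [hB.2.1 l (Finset.mem_range.mp hl), mul_one])]
    exact hA.2.1 i hi
  · intro j hj
    have : ∑ i ∈ range n, MulM n A B i j
        = ∑ l ∈ range n, (∑ i ∈ range n, A i l) * B l j := by
      simp only [MulM]
      rw [Finset.sum_comm]
      apply Finset.sum_congr rfl
      intro l _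
      rw [Finset.sum_mul]
    rw [this, Finset.sum_congr rfl (fun l hl => by rw [hA.2.2 l (Finset.mem_range.mp hl), one_mul])]
    exact hB.2.2 j hj

lemma MulM_SS {n : ℕ} {A B : ℕ → ℕ → ℝ} (hA : IsSS n A) (hB : IsSS n B) :
    IsSS n (MulM n A B) := by
  refine ⟨?_, ?_, ?_⟩
  · intro i j
    exact Finset.sum_nonneg fun l _ => mul_nonneg (hA.1 i l) (hB.1 l j)
  · intro i hi
    have h1 : ∑ j ∈ range n, MulM n A B i j
        = ∑ l ∈ range n, A i l * (∑ j ∈ range n, B l j) := by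
      have := MulM_apply (n := n) A B (fun _ => (1:ℝ)) i
      simp only [mul_one] at this
      exact this
    rw [h1]
    calc ∑ l ∈ range n, A i l * (∑ j ∈ range n, B l j)
        ≤ ∑ l ∈ range n, A i l * 1 := by
          apply Finset.sum_le_sum
          intro l hl
          exact mul_le_mul_of_nonneg_left (hB.2.1 l (Finset.mem_range.mp hl)) (hA.1 i l)
      _ ≤ 1 := by
          simp only [mul_one]
          exact hA.2.1 i hi
  · intro j hj
    have h1 : ∑ i ∈ range n, MulM n A B i j
        = ∑ l ∈ range n, (∑ i ∈ range n, A i l) * B l j := by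
      simp only [MulM]
      rw [Finset.sum_comm]
      exact Finset.sum_congr rfl fun l _ => (Finset.sum_mul _ _ _).symm
    rw [h1]
    calc ∑ l ∈ range n, (∑ i ∈ range n, A i l) * B l j
        ≤ ∑ l ∈ range n, 1 * B l j := by
          apply Finset.sum_le_sum
          intro l hl
          exact mul_le_mul_of_nonneg_right (hA.2.2 l (Finset.mem_range.mp hl)) (hB.1 l j)
      _ ≤ 1 := by
          simp only [one_mul]
          exact hB.2.2 j hj

lemma MulM_mono {n : ℕ} {A B : ℕ → ℕ → ℝ} (hBpos : ∀ i j, 0 ≤ B i j)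
    (hAm : Mono n A) (hBm : Mono n B) : Mono n (MulM n A B) := by
  intro x hx0 hx1 i i' hii' hi'
  rw [MulM_apply, MulM_apply]
  set y : ℕ → ℝ := fun l => ∑ j ∈ range n, B l j * x j with hy
  have hy0 : NN n y := by
    intro l _
    exact Finset.sum_nonneg fun j hj =>
      mul_nonneg (hBpos l j) (hx0 j (Finset.mem_range.mp hj))
  have hy1 : NI n y := by
    intro l l' hll' hl'
    exact hBm x hx0 hx1 l l' hll' hl'
  exact hAm y hy0 hy1 i i' hii' hi'

lemma sum_split (f : ℕ → ℝ) {k n : ℕ} (hk : k ≤ n) :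
    ∑ j ∈ range n, f j = ∑ j ∈ range k, f j + ∑ j ∈ range (n-k), f (k+j) := by
  conv_lhs => rw [show n = k + (n-k) by omega]
  exact Finset.sum_range_add f k (n-k)

/-- block diagonal matrix -/
def Blk (k : ℕ) (A₁ A₂ : ℕ → ℕ → ℝ) : ℕ → ℕ → ℝ :=
  fun i j => if i < k then (if j < k then A₁ i j else 0)
    else (if k ≤ j then A₂ (i-k) (j-k) else 0)

lemma Blk_row_lt {n k : ℕ} (A₁ A₂ : ℕ → ℕ → ℝ) (x : ℕ → ℝ) {i : ℕ} (hik : i < k)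
    (hk : k ≤ n) :
    ∑ j ∈ range n, Blk k A₁ A₂ i j * x j = ∑ j ∈ range k, A₁ i j * x j := by
  rw [sum_split _ hk]
  have h1 : ∀ j ∈ range k, Blk k A₁ A₂ i j * x j = A₁ i j * x j := by
    intro j hj
    rw [Finset.mem_range] at hj
    rw [Blk, if_pos hik, if_pos hj]
  have h2 : ∀ j ∈ range (n-k), Blk k A₁ A₂ i (k+j) * x (k+j) = 0 := by
    intro j hj
    rw [Finset.mem_range] at hj
    rw [Blk, if_pos hik, if_neg (by omega), zero_mul]
  rw [Finset.sum_congr rfl h1, Finset.sum_congr rfl h2]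
  simp

lemma Blk_row_ge {n k : ℕ} (A₁ A₂ : ℕ → ℕ → ℝ) (x : ℕ → ℝ) {i : ℕ} (hik : k ≤ i)
    (hk : k ≤ n) :
    ∑ j ∈ range n, Blk k A₁ A₂ i j * x j = ∑ j ∈ range (n-k), A₂ (i-k) j * x (k+j) := by
  rw [sum_split _ hk]
  have h1 : ∀ j ∈ range k, Blk k A₁ A₂ i j * x j = 0 := by
    intro j hj
    rw [Finset.mem_range] at hj
    rw [Blk, if_neg (by omega), if_neg (by omega), zero_mul]
  have h2 : ∀ j ∈ range (n-k), Blk k A₁ A₂ i (k+j) * x (k+j) = A₂ (i-k) j * x (k+j) := by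
    intro j hj
    rw [Finset.mem_range] at hj
    rw [Blk, if_neg (by omega), if_pos (by omega)]
    congr 2
    omega
  rw [Finset.sum_congr rfl h1, Finset.sum_congr rfl h2]
  simp

lemma Blk_col_sum {n k : ℕ} {A₁ A₂ : ℕ → ℕ → ℝ} (h₁ : IsDS k A₁) (h₂ : IsDS (n-k) A₂)
    (hk : k ≤ n) {j : ℕ} (hj : j < n) :
    ∑ i ∈ range n, Blk k A₁ A₂ i j = 1 := by
  rw [sum_split _ hk]
  rcases lt_or_ge j k with hjk | hjk
  · have h1 : ∀ i ∈ range k, Blk k A₁ A₂ i j = A₁ i j := by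
      intro i hi
      rw [Finset.mem_range] at hi
      rw [Blk, if_pos hi, if_pos hjk]
    have h2 : ∀ i ∈ range (n-k), Blk k A₁ A₂ (k+i) j = 0 := by
      intro i hi
      rw [Finset.mem_range] at hi
      rw [Blk, if_neg (by omega), if_neg (by omega)]
    rw [Finset.sum_congr rfl h1, Finset.sum_congr rfl h2]
    simp [h₁.2.2 j hjk]
  · have h1 : ∀ i ∈ range k, Blk k A₁ A₂ i j = 0 := by
      intro i hi
      rw [Finset.mem_range] at hi
      rw [Blk, if_pos hi, if_neg (by omega)]
    have h2 : ∀ i ∈ range (n-k), Blk k A₁ A₂ (k+i) j = A₂ i (j-k) := by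
      intro i hi
      rw [Finset.mem_range] at hi
      rw [Blk, if_neg (by omega), if_pos hjk]
      congr 1
      omega
    rw [Finset.sum_congr rfl h1, Finset.sum_congr rfl h2]
    simp [h₂.2.2 (j-k) (by omega)]

lemma Blk_DS {n k : ℕ} {A₁ A₂ : ℕ → ℕ → ℝ} (h₁ : IsDS k A₁) (h₂ : IsDS (n-k) A₂)
    (hk : k ≤ n) : IsDS n (Blk k A₁ A₂) := by
  refine ⟨?_, ?_, ?_⟩
  · intro i j
    rw [Blk]
    split
    · split
      · exact h₁.1 i j
      · exact le_refl 0
    · split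
      · exact h₂.1 _ _
      · exact le_refl 0
  · intro i hi
    rcases lt_or_ge i k with hik | hik
    · have := Blk_row_lt (n := n) A₁ A₂ (fun _ => (1:ℝ)) hik hk
      simp only [mul_one] at this
      rw [this]
      exact h₁.2.1 i hik
    · have := Blk_row_ge (n := n) A₁ A₂ (fun _ => (1:ℝ)) hik hk
      simp only [mul_one] at this
      rw [this]
      exact h₂.2.1 (i-k) (by omega)
  · intro j hj
    exact Blk_col_sum h₁ h₂ hk hj

lemma Blk_mono {n k : ℕ} {A₁ A₂ : ℕ → ℕ → ℝ} (h₁ : IsDS k A₁) (h₂ : IsDS (n-k) A₂)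
    (hk : k ≤ n) (hk0 : 0 < k) (m₁ : Mono k A₁) (m₂ : Mono (n-k) A₂) :
    Mono n (Blk k A₁ A₂) := by
  intro x hx0 hx1 i i' hii' hi'
  rcases lt_or_ge i' k with hi'k | hi'k
  · -- both rows in first block
    have hik : i < k := lt_of_le_of_lt hii' hi'k
    rw [Blk_row_lt A₁ A₂ x hik hk, Blk_row_lt A₁ A₂ x hi'k hk]
    exact m₁ x (fun j hj => hx0 j (by omega)) (fun p q hpq hq => hx1 p q hpq (by omega))
      i i' hii' hi'k
  · rcases lt_or_ge i k with hik | hik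
    · -- seam case : i < k ≤ i'
      rw [Blk_row_lt A₁ A₂ x hik hk, Blk_row_ge A₁ A₂ x hi'k hk]
      have hb1 : ∑ j ∈ range k, A₁ i j * x j ≥ x (k-1) := by
        apply out_ge h₁ _ hik
        intro j hj
        exact hx1 j (k-1) (by omega) (by omega)
      have hb2 : ∑ j ∈ range (n-k), A₂ (i'-k) j * x (k+j) ≤ x k := by
        apply out_le h₂ _ (show i' - k < n - k by omega)
        intro j hj
        exact hx1 k (k+j) (by omega) (by omega)
      have : x k ≤ x (k-1) := hx1 (k-1) k (by omega) (by omega)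
      linarith
    · -- both rows in second block
      rw [Blk_row_ge A₁ A₂ x hik hk, Blk_row_ge A₁ A₂ x hi'k hk]
      exact m₂ (fun j => x (k+j)) (fun j hj => hx0 (k+j) (by omega))
        (fun p q hpq hq => hx1 (k+p) (k+q) (by omega) (by omega))
        (i-k) (i'-k) (by omega) (by omega)

lemma P_affine (a : ℕ → ℝ) (t c : ℝ) (k : ℕ) :
    P (fun i => t * a i + c) k = t * P a k + k * c := by
  simp [P, Finset.sum_add_distrib, Finset.mul_sum]

lemma core (n : ℕ) : ∀ a b : ℕ → ℝ, NN n a → NI n a → NN n b → NI n b →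
    (∀ k, k ≤ n → P b k ≤ P a k) → P b n = P a n →
    ∃ A, IsDS n A ∧ Mono n A ∧ ∀ i, i < n → ∑ j ∈ range n, A i j * a j = b i := by
  induction n using Nat.strong_induction_on with
  | _ n IH =>
  intro a b ha0 ha1 hb0 hb1 hmaj heq
  classical
  rcases Nat.eq_zero_or_pos n with hn0 | hn
  · subst hn0
    exact ⟨fun _ _ => 0, ⟨fun _ _ => le_refl 0, fun i hi => absurd hi (Nat.not_lt_zero i),
      fun j hj => absurd hj (Nat.not_lt_zero j)⟩,
      fun x _ _ i i' _ hi' => absurd hi' (Nat.not_lt_zero i'), fun i hi => absurd hi (Nat.not_lt_zero i)⟩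
  have hnR : (0:ℝ) < n := Nat.cast_pos.mpr hn
  set mbar : ℝ := P a n / n with hmbar
  have hmbar0 : 0 ≤ mbar := div_nonneg (P_nonneg ha0 le_rfl) (le_of_lt hnR)
  have hnmbar : (n:ℝ) * mbar = P a n := by
    rw [hmbar]; field_simp
  have hg0 : ∀ k, k ≤ n → 0 ≤ P a k - k * mbar := by
    intro k hk
    have h1 := avg_mono ha0 ha1 hk
    have h2 : (k:ℝ) * mbar * n = k * P a n := by rw [hmbar]; field_simp
    nlinarith [hnR]
  set s := (Finset.Ico 1 n).filter (fun k : ℕ => (k:ℝ) * mbar < P b k) with hs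
  rcases Finset.eq_empty_or_nonempty s with hse | hsne
  · -- uniform case : b is constant = mbar, use Tmat n 0
    have hnotin : ∀ k, 1 ≤ k → k < n → P b k ≤ k * mbar := by
      intro k h1 h2
      by_contra hcon
      push_neg at hcon
      have : k ∈ s := Finset.mem_filter.mpr ⟨Finset.mem_Ico.mpr ⟨h1, h2⟩, hcon⟩
      rw [hse] at this
      exact absurd this (Finset.notMem_empty k)
    have htop : P b 1 ≤ mbar := by
      rcases Nat.lt_or_ge 1 n with h | h
      · simpa using hnotin 1 le_rfl h
      · have hn1 : n = 1 := le_antisymm h hn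
        rw [hn1] at heq hnmbar
        rw [heq, ← hnmbar]
        simp
    have hbot : mbar ≤ b (n-1) := by
      have hPn1 : P b (n-1) ≤ (n-1 : ℕ) * mbar := by
        rcases Nat.lt_or_ge 1 n with h | h
        · exact hnotin (n-1) (by omega) (by omega)
        · have hn1 : n = 1 := le_antisymm h hn
          simp [hn1, P]
      have hPn : P b n = (n:ℝ) * mbar := by rw [heq, hnmbar]
      have hsucc : P b n = P b (n-1) + b (n-1) := by
        conv_lhs => rw [show n = (n-1) + 1 by omega]
        exact P_succ b (n-1)
      have hcast : ((n-1:ℕ):ℝ) = (n:ℝ) - 1 := by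
        rw [Nat.cast_sub hn]; simp
      rw [hcast] at hPn1
      nlinarith
    have hbconst : ∀ i, i < n → b i = mbar := by
      intro i hi
      have h1 : b i ≤ b 0 := hb1 0 i (Nat.zero_le i) hi
      have h2 : b (n-1) ≤ b i := hb1 i (n-1) (by omega) (by omega)
      have h3 : b 0 = P b 1 := by simp [P]
      linarith
    refine ⟨Tmat n 0, Tmat_DS hn le_rfl zero_le_one, Tmat_mono le_rfl, ?_⟩
    intro i hi
    rw [Tmat_apply a hi, hbconst i hi]
    simp [hmbar, div_eq_inv_mul]
  · -- pinch case
    set g : ℕ → ℝ := fun k => P a k - k * mbar with hgdef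
    set h : ℕ → ℝ := fun k => P b k - k * mbar with hhdef
    obtain ⟨K, hKs, hKmax⟩ := Finset.exists_max_image s (fun k => h k / g k) hsne
    obtain ⟨hK1, hKlt⟩ := Finset.mem_Ico.mp (Finset.mem_filter.mp hKs).1
    have hhK : 0 < h K := by
      have := (Finset.mem_filter.mp hKs).2
      simp only [hhdef]
      linarith
    have hgK : 0 < g K := by
      have := hmaj K (le_of_lt hKlt)
      simp only [hgdef]
      simp only [hhdef] at hhK
      linarith
    set lam : ℝ := h K / g K with hlam
    have hlam0 : 0 < lam := div_pos hhK hgK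
    have hlam1 : lam ≤ 1 := by
      rw [hlam, div_le_one hgK]
      have := hmaj K (le_of_lt hKlt)
      simp only [hgdef, hhdef]
      linarith
    set a' : ℕ → ℝ := fun i => lam * a i + (1 - lam) * mbar with ha'
    have hPa' : ∀ k, P a' k = lam * P a k + k * ((1-lam) * mbar) := fun k => P_affine a lam _ k
    have ha'0 : NN n a' := by
      intro i hi
      show 0 ≤ lam * a i + (1 - lam) * mbar
      have := ha0 i hi
      have h1 : 0 ≤ (1-lam) * mbar := mul_nonneg (by linarith) hmbar0
      nlinarith
    have ha'1 : NI n a' := by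
      intro i j hij hj
      show lam * a j + (1 - lam) * mbar ≤ lam * a i + (1 - lam) * mbar
      have := ha1 i j hij hj
      nlinarith
    have hmaj' : ∀ k, k ≤ n → P b k ≤ P a' k := by
      intro k hk
      rw [hPa']
      rcases Nat.eq_zero_or_pos k with rfl | hk1
      · simp [P]
      rcases Nat.eq_or_lt_of_le hk with rfl | hklt
      · rw [heq]
        have : (k:ℝ) * ((1-lam)*mbar) = (1-lam) * P a k := by
          rw [← hnmbar]; ring
        rw [this]; ring_nf; exact le_refl _
      by_cases hks : k ∈ s
      · have hmax := hKmax k hks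
        have hhk : 0 < h k := by
          have := (Finset.mem_filter.mp hks).2
          simp only [hhdef]; linarith
        have hgk : 0 < g k := by
          have := hmaj k hk
          simp only [hgdef]; simp only [hhdef] at hhk; linarith
        have : h k ≤ lam * g k := by
          rw [hlam]
          rw [div_le_div_iff₀ hgk hgK] at hmax
          rw [div_mul_eq_mul_div, le_div_iff₀ hgK]
          linarith
        simp only [hhdef, hgdef] at this
        linarith
      · have hnotbig : P b k ≤ k * mbar := by
          by_contra hcon
          push_neg at hcon
          exact hks (Finset.mem_filter.mpr ⟨Finset.mem_Ico.mpr ⟨hk1, hklt⟩, hcon⟩)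
        have hgk : 0 ≤ g k := hg0 k hk
        simp only [hgdef] at hgk
        nlinarith
    have heqK : P b K = P a' K := by
      rw [hPa']
      have : h K = lam * g K := by
        rw [hlam]
        field_simp
      simp only [hhdef, hgdef] at this
      linarith
    -- subproblem 1
    obtain ⟨A₁, hA₁DS, hA₁m, hA₁v⟩ := IH K hKlt a' b
      (fun i hi => ha'0 i (lt_trans hi hKlt)) (fun i j hij hj => ha'1 i j hij (lt_trans hj hKlt))
      (fun i hi => hb0 i (lt_trans hi hKlt)) (fun i j hij hj => hb1 i j hij (lt_trans hj hKlt))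
      (fun k hk => hmaj' k (le_trans hk (le_of_lt hKlt))) heqK
    -- subproblem 2
    have hPa'n : P a' n = P a n := by
      rw [hPa']
      have : (n:ℝ) * ((1-lam)*mbar) = (1-lam) * P a n := by rw [← hnmbar]; ring
      rw [this]; ring
    obtain ⟨A₂, hA₂DS, hA₂m, hA₂v⟩ := IH (n - K) (by omega)
      (fun i => a' (i + K)) (fun i => b (i + K))
      (fun i hi => ha'0 (i+K) (by omega)) (fun i j hij hj => ha'1 (i+K) (j+K) (by omega) (by omega))
      (fun i hi => hb0 (i+K) (by omega)) (fun i j hij hj => hb1 (i+K) (j+K) (by omega) (by omega))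
      (by
        intro k hk
        rw [P_shift b K k, P_shift a' K k]
        have := hmaj' (K + k) (by omega)
        rw [heqK]
        linarith)
      (by
        rw [P_shift b K (n-K), P_shift a' K (n-K)]
        rw [show K + (n - K) = n by omega, heqK, hPa'n, heq])
    have hBlkDS : IsDS n (Blk K A₁ A₂) := Blk_DS hA₁DS hA₂DS (le_of_lt hKlt)
    have hBlkm : Mono n (Blk K A₁ A₂) := Blk_mono hA₁DS hA₂DS (le_of_lt hKlt) hK1 hA₁m hA₂m
    have hTDS : IsDS n (Tmat n lam) := Tmat_DS hn (le_of_lt hlam0) hlam1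
    refine ⟨MulM n (Blk K A₁ A₂) (Tmat n lam), MulM_DS hBlkDS hTDS,
      MulM_mono hTDS.1 hBlkm (Tmat_mono (le_of_lt hlam0)), ?_⟩
    intro i hi
    rw [MulM_apply]
    have hTa : ∀ l ∈ range n, (Blk K A₁ A₂) i l * (∑ j ∈ range n, Tmat n lam l j * a j)
        = (Blk K A₁ A₂) i l * a' l := by
      intro l hl
      rw [Finset.mem_range] at hl
      rw [Tmat_apply a hl]
      congr 1
      rw [ha']
      have : (1 - lam)/n * P a n = (1-lam) * mbar := by
        rw [hmbar]; ring
      rw [this]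
    rw [Finset.sum_congr rfl hTa]
    rcases Nat.lt_or_ge i K with hiK | hiK
    · rw [Blk_row_lt A₁ A₂ a' hiK (le_of_lt hKlt)]
      exact hA₁v i hiK
    · rw [Blk_row_ge A₁ A₂ a' hiK (le_of_lt hKlt)]
      have := hA₂v (i - K) (by omega)
      calc ∑ j ∈ range (n-K), A₂ (i-K) j * a' (K+j)
          = ∑ j ∈ range (n-K), A₂ (i-K) j * a' (j+K) := by
            apply Finset.sum_congr rfl
            intro j _
            rw [Nat.add_comm]
        _ = b (i - K + K) := this
        _ = b i := by rw [Nat.sub_add_cancel hiK]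

/-- diagonal matrix restricted to the n-block -/
def DiagM (n : ℕ) (d : ℕ → ℝ) : ℕ → ℕ → ℝ := fun i j => if i = j ∧ i < n then d i else 0

lemma DiagM_apply {n : ℕ} (d : ℕ → ℝ) (x : ℕ → ℝ) {i : ℕ} (hi : i < n) :
    ∑ j ∈ range n, DiagM n d i j * x j = d i * x i := by
  have h : ∀ j ∈ range n, DiagM n d i j * x j = if i = j then d i * x j else 0 := by
    intro j hj
    rw [DiagM]
    by_cases h : i = j
    · rw [if_pos ⟨h, hi⟩, if_pos h]
    · rw [if_neg (fun hc => h hc.1), if_neg h, zero_mul]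
  rw [Finset.sum_congr rfl h, Finset.sum_ite_eq (range n) i, if_pos (Finset.mem_range.mpr hi)]

lemma DiagM_SS {n : ℕ} {d : ℕ → ℝ} (hd0 : ∀ i, 0 ≤ d i) (hd1 : ∀ i, d i ≤ 1) :
    IsSS n (DiagM n d) := by
  refine ⟨?_, ?_, ?_⟩
  · intro i j
    rw [DiagM]
    split
    · exact hd0 i
    · exact le_refl 0
  · intro i hi
    have := DiagM_apply (n := n) d (fun _ => (1:ℝ)) hi
    simp only [mul_one] at this
    rw [this]
    exact hd1 i
  · intro j hj
    have h : ∀ i ∈ range n, DiagM n d i j = if j = i then d j else 0 := by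
      intro i hi
      rw [DiagM]
      rcases eq_or_ne i j with h | h
      · rw [if_pos ⟨h, Finset.mem_range.mp hi⟩, if_pos h.symm, h]
      · rw [if_neg (fun hc => h hc.1), if_neg (Ne.symm h)]
    rw [Finset.sum_congr rfl h, Finset.sum_ite_eq (range n) j, if_pos (Finset.mem_range.mpr hj)]
    exact hd1 j

lemma DiagM_mono {n : ℕ} {d : ℕ → ℝ} (hd0 : ∀ i, 0 ≤ d i)
    (hdm : ∀ i j, i ≤ j → d j ≤ d i) : Mono n (DiagM n d) := by
  intro x hx0 hx1 i i' hii' hi'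
  rw [DiagM_apply d x hi', DiagM_apply d x (lt_of_le_of_lt hii' hi')]
  exact mul_le_mul (hdm i i' hii') (hx1 i i' hii' hi') (hx0 i' hi') (hd0 i)

/-- the full substochastic theorem at the ℕ level -/
theorem natHLP (n : ℕ) (a b : ℕ → ℝ) (ha0 : NN n a) (ha1 : NI n a) (hb0 : NN n b)
    (hb1 : NI n b) (hmaj : ∀ k, k ≤ n → P b k ≤ P a k) :
    ∃ A, IsSS n A ∧ Mono n A ∧ ∀ i, i < n → ∑ j ∈ range n, A i j * a j = b i := by
  classical
  set m := Nat.findGreatest (fun k => P a k ≤ P b n) n with hm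
  have hm0 : P a m ≤ P b n := by
    have h00 : P a 0 ≤ P b n := by
      have h1 : P a 0 = 0 := by simp [P]
      rw [h1]
      exact P_nonneg hb0 le_rfl
    exact Nat.findGreatest_spec (P := fun k => P a k ≤ P b n) (Nat.zero_le n) h00
  have hmn : m ≤ n := Nat.findGreatest_le n
  have hgt : ∀ k, m < k → k ≤ n → P b n < P a k := by
    intro k h1 h2
    have := Nat.findGreatest_is_greatest (P := fun k => P a k ≤ P b n) h1 h2
    exact not_le.mp this
  set r : ℝ := if hc : m < n then (P b n - P a m) / a m else 0 with hr
  have key : m < n → 0 < a m ∧ 0 ≤ r ∧ r < 1 := by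
    intro hc
    have h1 : P b n < P a (m+1) := hgt (m+1) (Nat.lt_succ_self m) hc
    rw [P_succ] at h1
    have ham : 0 < a m := by linarith
    constructor
    · exact ham
    rw [hr, dif_pos hc]
    constructor
    · exact div_nonneg (by linarith) (le_of_lt ham)
    · rw [div_lt_one ham]
      linarith
  set d : ℕ → ℝ := fun i => if i < m then 1 else if i = m ∧ m < n then r else 0 with hd
  have hd0 : ∀ i, 0 ≤ d i := by
    intro i
    rw [hd]
    dsimp only
    split
    · exact zero_le_one
    split
    · next hcc => exact (key hcc.2).2.1
    · exact le_refl 0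
  have hd1 : ∀ i, d i ≤ 1 := by
    intro i
    rw [hd]
    dsimp only
    split
    · exact le_refl 1
    split
    · next hcc => exact le_of_lt (key hcc.2).2.2
    · exact zero_le_one
  have hdm : ∀ i j, i ≤ j → d j ≤ d i := by
    intro i j hij
    rw [hd]
    dsimp only
    by_cases h1 : j < m
    · rw [if_pos h1, if_pos (by omega)]
    rw [if_neg h1]
    by_cases h2 : j = m ∧ m < n
    · rw [if_pos h2]
      by_cases h3 : i < m
      · rw [if_pos h3]; exact le_of_lt (key h2.2).2.2
      · rw [if_neg h3, if_pos (by omega : i = m ∧ m < n)]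
    · rw [if_neg h2]
      by_cases h3 : i < m
      · rw [if_pos h3]; exact zero_le_one
      rw [if_neg h3]
      by_cases h4 : i = m ∧ m < n
      · rw [if_pos h4]; exact (key h4.2).2.1
      · rw [if_neg h4]
  set a' : ℕ → ℝ := fun i => d i * a i with ha'
  have ha'0 : NN n a' := fun i hi => mul_nonneg (hd0 i) (ha0 i hi)
  have ha'1 : NI n a' := by
    intro i j hij hj
    show d j * a j ≤ d i * a i
    exact mul_le_mul (hdm i j hij) (ha1 i j hij hj) (ha0 j hj)
      (le_trans (hd0 i) (le_of_eq rfl)) |>.trans (le_refl _) |>.trans (le_refl _)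
  have hPle : ∀ k, k ≤ m → P a' k = P a k := by
    intro k hk
    apply Finset.sum_congr rfl
    intro i hi
    rw [Finset.mem_range] at hi
    show d i * a i = a i
    rw [hd]
    dsimp only
    rw [if_pos (by omega)]
    ring
  have hPgt : ∀ k, m < k → k ≤ n → P a' k = P b n := by
    intro k h1 h2
    have hmln : m < n := lt_of_lt_of_le h1 h2
    have hsucc : P a' (m+1) = P b n := by
      rw [P_succ, hPle m le_rfl]
      show P a m + d m * a m = P b n
      rw [hd]
      dsimp only
      rw [if_neg (lt_irrefl m), if_pos ⟨rfl, hmln⟩, hr, dif_pos hmln]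
      have ham := (key hmln).1
      field_simp
      ring
    have hsplit : P a' k = P a' (m+1) + ∑ i ∈ Finset.Ico (m+1) k, a' i := by
      rw [P, P, Finset.range_eq_Ico, Finset.range_eq_Ico]
      exact (Finset.sum_Ico_consecutive _ (Nat.zero_le (m+1)) h1).symm
    have hzero : ∀ i ∈ Finset.Ico (m+1) k, a' i = 0 := by
      intro i hi
      rw [Finset.mem_Ico] at hi
      show d i * a i = 0
      rw [hd]
      dsimp only
      rw [if_neg (by omega), if_neg (by omega)]
      ring
    rw [hsplit, Finset.sum_congr rfl hzero, hsucc]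
    simp
  have hPb_mono : ∀ k, k ≤ n → P b k ≤ P b n := by
    intro k hk
    have : P b n = P b k + ∑ i ∈ Finset.Ico k n, b i := by
      rw [P, P, Finset.range_eq_Ico, Finset.range_eq_Ico]
      exact (Finset.sum_Ico_consecutive _ (Nat.zero_le k) hk).symm
    rw [this]
    have : 0 ≤ ∑ i ∈ Finset.Ico k n, b i := by
      apply Finset.sum_nonneg
      intro i hi
      rw [Finset.mem_Ico] at hi
      exact hb0 i hi.2
    linarith
  have hmaj' : ∀ k, k ≤ n → P b k ≤ P a' k := by
    intro k hk
    rcases Nat.lt_or_ge m k with h | h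
    · rw [hPgt k h hk]
      exact hPb_mono k hk
    · rw [hPle k h]
      exact hmaj k hk
  have heq' : P b n = P a' n := by
    rcases Nat.lt_or_ge m n with h | h
    · exact (hPgt n h le_rfl).symm
    · have hmn' : m = n := le_antisymm hmn h
      rw [hPle n (le_of_eq hmn'.symm)]
      exact le_antisymm (hmaj n le_rfl) (hmn' ▸ hm0)
  obtain ⟨M, hMDS, hMm, hMv⟩ := core n a' b ha'0 ha'1 hb0 hb1 hmaj' heq'
  have hDSS : IsSS n (DiagM n d) := DiagM_SS hd0 hd1
  have hDm : Mono n (DiagM n d) := DiagM_mono hd0 hdm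
  refine ⟨MulM n M (DiagM n d), MulM_SS hMDS.isSS hDSS, MulM_mono hDSS.1 hMm hDm, ?_⟩
  intro i hi
  rw [MulM_apply]
  have hdiag : ∀ l ∈ range n, M i l * (∑ j ∈ range n, DiagM n d l j * a j) = M i l * a' l := by
    intro l hl
    rw [Finset.mem_range] at hl
    rw [DiagM_apply d a hl]
  rw [Finset.sum_congr rfl hdiag]
  exact hMv i hi

lemma sum_Iic_ext {n : ℕ} (v : Fin n → ℝ) (k : Fin n) :
    ∑ i ∈ Finset.Iic k, v i = P (fun j => if h : j < n then v ⟨j,h⟩ else 0) (k.val + 1) := by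
  rw [P]
  refine Finset.sum_bij' (fun (i : Fin n) _ => (i : ℕ))
    (fun j hj => (⟨j, by
      rw [Finset.mem_range] at hj
      omega⟩ : Fin n)) ?_ ?_ ?_ ?_ ?_
  · intro a ha
    rw [Finset.mem_range]
    rw [Finset.mem_Iic] at ha
    exact Nat.lt_succ_of_le ha
  · intro j hj
    rw [Finset.mem_Iic]
    rw [Finset.mem_range] at hj
    exact Fin.mk_le_of_le_val (by omega)
  · intro a ha
    simp
  · intro j hj
    simp
  · intro a ha
    rw [dif_pos a.isLt]


lemma fin_dot {n : ℕ} (A : ℕ → ℕ → ℝ) (x : Fin n → ℝ) (p : ℕ) :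
    ∑ j : Fin n, A p j.val * x j
      = ∑ l ∈ range n, A p l * (if h : l < n then x ⟨l, h⟩ else 0) := by
  rw [← Fin.sum_univ_eq_sum_range (fun l => A p l * (if h : l < n then x ⟨l, h⟩ else 0)) n]
  apply Finset.sum_congr rfl
  intro j _
  rw [dif_pos j.isLt]

end
end HLPaux

/-- monotone Hardy–Littlewood–Pólya theorem, substochastic case. -/
theorem exists_substochastic_monotone_of_submajorize {n : ℕ} (a b : Fin n → ℝ)
    (ha0 : ∀ i, 0 ≤ a i) (hb0 : ∀ i, 0 ≤ b i)
    (haA : ∀ i j : Fin n, i ≤ j → a j ≤ a i) (hbA : ∀ i j : Fin n, i ≤ j → b j ≤ b i)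
    (hmaj : ∀ k : Fin n, ∑ i ∈ Finset.Iic k, b i ≤ ∑ i ∈ Finset.Iic k, a i) :
    ∃ A : Matrix (Fin n) (Fin n) ℝ,
      Substochastic A ∧ MonotoneMatrix A ∧ A.mulVec a = b := by
  classical
  set a' : ℕ → ℝ := fun j => if h : j < n then a ⟨j, h⟩ else 0 with ha'
  set b' : ℕ → ℝ := fun j => if h : j < n then b ⟨j, h⟩ else 0 with hb'
  have ha'0 : HLPaux.NN n a' := by
    intro i hi
    rw [ha']
    dsimp only
    rw [dif_pos hi]
    exact ha0 _
  have hb'0 : HLPaux.NN n b' := by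
    intro i hi
    rw [hb']
    dsimp only
    rw [dif_pos hi]
    exact hb0 _
  have ha'1 : HLPaux.NI n a' := by
    intro i j hij hj
    have hi : i < n := lt_of_le_of_lt hij hj
    show a' j ≤ a' i
    rw [ha']
    dsimp only
    rw [dif_pos hj, dif_pos hi]
    exact haA ⟨i, hi⟩ ⟨j, hj⟩ hij
  have hb'1 : HLPaux.NI n b' := by
    intro i j hij hj
    have hi : i < n := lt_of_le_of_lt hij hj
    show b' j ≤ b' i
    rw [hb']
    dsimp only
    rw [dif_pos hj, dif_pos hi]
    exact hbA ⟨i, hi⟩ ⟨j, hj⟩ hij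
  have hmaj' : ∀ k, k ≤ n → HLPaux.P b' k ≤ HLPaux.P a' k := by
    intro k hk
    rcases Nat.eq_zero_or_pos k with rfl | hk0
    · simp [HLPaux.P]
    have hklt : k - 1 < n := by omega
    have hb'' := HLPaux.sum_Iic_ext b ⟨k-1, hklt⟩
    have ha'' := HLPaux.sum_Iic_ext a ⟨k-1, hklt⟩
    have hk1 : k - 1 + 1 = k := by omega
    rw [hk1] at hb'' ha''
    rw [← hb'', ← ha'']
    exact hmaj ⟨k-1, hklt⟩
  obtain ⟨A, hSS, hM, hV⟩ := HLPaux.natHLP n a' b' ha'0 ha'1 hb'0 hb'1 hmaj'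
  refine ⟨Matrix.of fun i j : Fin n => A i.val j.val, ⟨?_, ?_, ?_⟩, ?_, ?_⟩
  · intro i j
    exact hSS.1 i.val j.val
  · intro i
    show ∑ j : Fin n, A i.val j.val ≤ 1
    rw [Fin.sum_univ_eq_sum_range (fun jv => A i.val jv) n]
    exact hSS.2.1 i.val i.isLt
  · intro j
    show ∑ i : Fin n, A i.val j.val ≤ 1
    rw [Fin.sum_univ_eq_sum_range (fun iv => A iv j.val) n]
    exact hSS.2.2 j.val j.isLt
  · intro x hx0 hx1 i j hij
    set x' : ℕ → ℝ := fun l => if h : l < n then x ⟨l, h⟩ else 0 with hx'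
    have hvec : ∀ p : Fin n, (Matrix.of fun i j : Fin n => A i.val j.val).mulVec x p
        = ∑ l ∈ Finset.range n, A p.val l * x' l := by
      intro p
      simp only [Matrix.mulVec, dotProduct, Matrix.of_apply]
      rw [HLPaux.fin_dot A x p.val]
    rw [hvec i, hvec j]
    apply hM x'
    · intro l hl
      rw [hx']
      dsimp only
      rw [dif_pos hl]
      exact hx0 _
    · intro p q hpq hq
      have hp : p < n := lt_of_le_of_lt hpq hq
      show x' q ≤ x' p
      rw [hx']
      dsimp only
      rw [dif_pos hq, dif_pos hp]
      exact hx1 ⟨p, hp⟩ ⟨q, hq⟩ hpq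
    · exact hij
    · exact j.isLt
  · funext i
    have : (Matrix.of fun i j : Fin n => A i.val j.val).mulVec a i
        = ∑ l ∈ Finset.range n, A i.val l * a' l := by
      simp only [Matrix.mulVec, dotProduct, Matrix.of_apply]
      rw [HLPaux.fin_dot A a i.val]
    rw [this, hV i.val i.isLt, hb']
    dsimp only
    rw [dif_pos i.isLt]
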